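/- Let k be a field, G a group, and V a G-graded representation of G, i.e. a k-vector space V with a k-linear action of G and an internal direct sum decomposition V = ⊕_{σ∈G} V_σ into subspaces such that g·V_σ ⊆ V_{gσ} for all g, σ ∈ G. Then the k-linear map R : V⊗V → V⊗V defined by R(u⊗v) = Σ_σ σ·u ⊗ v_σ (where v = Σ_σ v_σ is the decomposition of v into homogeneous components) is a solution of the Hopf equation (R¹²R²³ = R²³R¹³R¹²). -/
import Mathlib


open TensorProduct LinearMap

section HopfEq

variable (k V : Type*) [Field k] [AddCommGroup V] [Module k V]

/-- The flip map `τ : V ⊗ V → V ⊗ V`, `τ(v ⊗ w) = w ⊗ v`. -/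
noncomputable def flipMap : V ⊗[k] V →ₗ[k] V ⊗[k] V :=
  (TensorProduct.comm k V V).toLinearMap

variable {k V}

/-- `R¹² = R ⊗ I` as an endomorphism of `V ⊗ V ⊗ V`. -/
noncomputable def map12 (R : V ⊗[k] V →ₗ[k] V ⊗[k] V) :
    V ⊗[k] (V ⊗[k] V) →ₗ[k] V ⊗[k] (V ⊗[k] V) :=
  (TensorProduct.assoc k V V V).toLinearMap ∘ₗ R.rTensor V ∘ₗ
    (TensorProduct.assoc k V V V).symm.toLinearMap

/-- `R²³ = I ⊗ R` as an endomorphism of `V ⊗ V ⊗ V`. -/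
noncomputable def map23 (R : V ⊗[k] V →ₗ[k] V ⊗[k] V) :
    V ⊗[k] (V ⊗[k] V) →ₗ[k] V ⊗[k] (V ⊗[k] V) :=
  R.lTensor V

/-- `R¹³ = (I ⊗ τ)(R ⊗ I)(I ⊗ τ)` as an endomorphism of `V ⊗ V ⊗ V`. -/
noncomputable def map13 (R : V ⊗[k] V →ₗ[k] V ⊗[k] V) :
    V ⊗[k] (V ⊗[k] V) →ₗ[k] V ⊗[k] (V ⊗[k] V) :=
  (flipMap k V).lTensor V ∘ₗ map12 R ∘ₗ (flipMap k V).lTensor V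

/-- `R` is a solution of the Hopf equation: `R¹²R²³ = R²³R¹³R¹²`. -/
def IsHopfSolution (R : V ⊗[k] V →ₗ[k] V ⊗[k] V) : Prop :=
  map12 R ∘ₗ map23 R = map23 R ∘ₗ map13 R ∘ₗ map12 R

/-- `R` is a solution of the pentagonal equation: `R¹²R¹³R²³ = R²³R¹²`. -/
def IsPentagonSolution (R : V ⊗[k] V →ₗ[k] V ⊗[k] V) : Prop :=
  map12 R ∘ₗ map13 R ∘ₗ map23 R = map23 R ∘ₗ map12 R

end HopfEq

/-- if `V = ⊕_{σ ∈ G} V_σ` is a `G`-graded representation of a group `G`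
(`g • V_σ ⊆ V_{gσ}`), then the map `R(u ⊗ v) = Σ_σ (σ • u) ⊗ v_σ` is a solution of the
Hopf equation. -/
theorem graded_representation_isHopfSolution (k G V : Type*) [Field k] [Group G]
    [DecidableEq G] [AddCommGroup V] [Module k V] [DistribMulAction G V] [SMulCommClass G k V]
    (Vσ : G → Submodule k V) (hdirect : DirectSum.IsInternal Vσ)
    (hgraded : ∀ (g σ : G) (v : V), v ∈ Vσ σ → g • v ∈ Vσ (g * σ))
    (R : V ⊗[k] V →ₗ[k] V ⊗[k] V)
    (hR : ∀ (σ : G) (u v : V), v ∈ Vσ σ → R (u ⊗ₜ[k] v) = (σ • u) ⊗ₜ[k] v) :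
    IsHopfSolution R := by
  have htop : ⨆ σ, Vσ σ = ⊤ := hdirect.submodule_iSup_eq_top
  unfold IsHopfSolution
  apply TensorProduct.ext'
  intro u x
  induction x using TensorProduct.induction_on with
  | zero => simp
  | add a b ha hb => simp only [tmul_add, map_add, ha, hb]
  | tmul v w =>
    have hv : v ∈ ⨆ σ, Vσ σ := htop ▸ Submodule.mem_top
    induction hv using Submodule.iSup_induction' with
    | mem σ v hv =>
      have hw : w ∈ ⨆ σ, Vσ σ := htop ▸ Submodule.mem_top
      induction hw using Submodule.iSup_induction' with
      | mem τ w hw =>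
        simp only [coe_comp, Function.comp_apply, map12, map23, map13, flipMap,
          lTensor_tmul, LinearEquiv.coe_coe, TensorProduct.assoc_symm_tmul,
          rTensor_tmul, TensorProduct.assoc_tmul, TensorProduct.comm_tmul,
          hR τ v w hw, hR σ u v hv, hR (τ * σ) u (τ • v) (hgraded τ σ v hv),
          hR τ (σ • u) w hw, mul_smul]
      | zero => simp only [tmul_zero, map_zero]
      | add a b _ _ ha hb => simp only [tmul_add, map_add, ha, hb]
    | zero => simp only [zero_tmul, tmul_zero, map_zero]
    | add a b _ _ ha hb => simp only [add_tmul, tmul_add, map_add, ha, hb]
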